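/- Let q > 1 and let φ₀ : ℝ → ℝ be a Schwartz function. Define φ_{m+1}(x) = φ_m(x) − q^{−(m+1)} · φَm(x/q) for m ∈ ℕ. Then for every x ∈ ℝ, the limit lim_{m→∞} φ_m(x) exists and equals Σ_{ℓ=0}^∞ (1/∏_{k=1}^{ℓ}(1 − q^k)) · φ₀(q^{−ℓ} x), where the empty product (ℓ = 0) equals 1. -/

import Mathlib

open Filter


namespace Stmt8Aux

noncomputable def c (q : ℝ) : ℕ → ℕ → ℝ
  | 0, 0 => 1
  | 0, _+1 => 0
  | m+1, 0 => c q m 0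
  | m+1, ℓ+1 => c q m (ℓ+1) - q⁻¹ ^ (m+1) * c q m ℓ

lemma c_zero_of_lt (q : ℝ) : ∀ m ℓ : ℕ, m < ℓ → c q m ℓ = 0 := by
  intro m
  induction m with
  | zero => intro ℓ h; match ℓ, h with | ℓ+1, _ => rfl
  | succ m ih =>
    intro ℓ h
    match ℓ, h with
    | ℓ+1, h =>
      show c q m (ℓ+1) - q⁻¹ ^ (m+1) * c q m ℓ = 0
      rw [ih (ℓ+1) (by omega), ih ℓ (by omega)]
      ring

lemma c_zero' (q : ℝ) : ∀ m : ℕ, c q m 0 = 1 := by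
  intro m; induction m with
  | zero => rfl
  | succ m ih => show c q m 0 = 1; exact ih

lemma c_sign (q : ℝ) (hq : 1 < q) : ∀ m ℓ : ℕ, 0 ≤ (-1)^ℓ * c q m ℓ := by
  have hq0 : (0:ℝ) < q⁻¹ := by positivity
  intro m
  induction m with
  | zero =>
    intro ℓ
    match ℓ with
    | 0 => norm_num [c]
    | ℓ+1 => simp [c]
  | succ m ih =>
    intro ℓ
    match ℓ with
    | 0 => simpa [c_zero'] using (zero_le_one (α := ℝ))
    | ℓ+1 =>
      have : (-1:ℝ)^(ℓ+1) * c q (m+1) (ℓ+1)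
          = (-1)^(ℓ+1) * c q m (ℓ+1) + q⁻¹^(m+1) * ((-1)^ℓ * c q m ℓ) := by
        show (-1:ℝ)^(ℓ+1) * (c q m (ℓ+1) - q⁻¹ ^ (m+1) * c q m ℓ) = _
        ring
      rw [this]
      have h1 := ih (ℓ+1)
      have h2 := ih ℓ
      positivity

lemma c_mono (q : ℝ) (hq : 1 < q) (ℓ : ℕ) :
    Monotone (fun m => (-1:ℝ)^ℓ * c q m ℓ) := by
  have hq0 : (0:ℝ) < q⁻¹ := by positivity
  apply monotone_nat_of_le_succ
  intro m
  match ℓ with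
  | 0 => simp [c_zero']
  | ℓ+1 =>
    have : (-1:ℝ)^(ℓ+1) * c q (m+1) (ℓ+1)
        = (-1)^(ℓ+1) * c q m (ℓ+1) + q⁻¹^(m+1) * ((-1)^ℓ * c q m ℓ) := by
      show (-1:ℝ)^(ℓ+1) * (c q m (ℓ+1) - q⁻¹ ^ (m+1) * c q m ℓ) = _
      ring
    rw [this]
    have h2 := mul_nonneg (pow_nonneg hq0.le (m+1)) (c_sign q hq m ℓ)
    linarith


lemma pow_aux : ∀ (n : ℕ) (a b : ℝ), 0 ≤ a → 0 ≤ b →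
    a^(n+1) + ((n:ℝ)+1) * b * a^n ≤ (a+b)^(n+1) := by
  intro n
  induction n with
  | zero => intro a b ha hb; norm_num
  | succ n ih =>
    intro a b ha hb
    have h := ih a b ha hb
    have key := mul_le_mul_of_nonneg_left h (add_nonneg ha hb)
    have h1 : (0:ℝ) ≤ b * b * a ^ n := by positivity
    have e1 : (a+b)^(n+1+1) = (a+b) * (a+b)^(n+1) := by ring
    have expand : (a+b)*(a^(n+1) + ((n:ℝ)+1)*b*a^n)
        = a^(n+1+1) + ((n:ℝ)+1+1)*b*a^(n+1) + ((n:ℝ)+1)*(b*b*a^n) := by ring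
    have h2 : 0 ≤ ((n:ℝ)+1)*(b*b*a^n) := by positivity
    push_cast
    linarith [key, expand, h2, e1]

noncomputable def S (q : ℝ) (m : ℕ) : ℝ := ∑ j ∈ Finset.range m, q⁻¹ ^ (j+1)

lemma S_succ (q : ℝ) (m : ℕ) : S q (m+1) = S q m + q⁻¹^(m+1) :=
  Finset.sum_range_succ _ _

lemma S_nonneg (q : ℝ) (hq : 1 < q) (m : ℕ) : 0 ≤ S q m := by
  have : (0:ℝ) < q⁻¹ := by positivity
  exact Finset.sum_nonneg fun j _ => by positivity

lemma S_eq (q : ℝ) (hq : 1 < q) (m : ℕ) : S q m = (q-1)⁻¹ * (1 - q⁻¹^m) := by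
  have hq0 : q ≠ 0 := by positivity
  have hq1 : q - 1 ≠ 0 := by intro h; nlinarith
  induction m with
  | zero => simp [S]
  | succ m ih =>
    rw [S_succ, ih]
    field_simp
    linear_combination (1/q)^m * (mul_one_div_cancel hq0 : q * (1/q) = 1)

lemma S_le (q : ℝ) (hq : 1 < q) (m : ℕ) : S q m ≤ (q-1)⁻¹ := by
  rw [S_eq q hq]
  have h1 : (0:ℝ) < (q-1)⁻¹ := by
    have : (0:ℝ) < q - 1 := by linarith
    positivity
  have h2 : (0:ℝ) ≤ q⁻¹^m := by positivity
  nlinarith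

lemma c_le (q : ℝ) (hq : 1 < q) : ∀ m ℓ : ℕ,
    (-1)^ℓ * c q m ℓ ≤ S q m ^ ℓ / ℓ.factorial := by
  have hq0 : (0:ℝ) < q⁻¹ := by positivity
  intro m
  induction m with
  | zero =>
    intro ℓ
    match ℓ with
    | 0 => norm_num [c, S]
    | ℓ+1 =>
      show (-1:ℝ)^(ℓ+1) * 0 ≤ _
      rw [mul_zero]
      simp [S]
  | succ m ih =>
    intro ℓ
    match ℓ with
    | 0 => simp [c_zero']
    | ℓ+1 =>
      have hS := S_nonneg q hq m
      have ht : (0:ℝ) ≤ q⁻¹^(m+1) := by positivity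
      have hf : ((ℓ+1).factorial : ℝ) = ((ℓ:ℝ)+1) * ℓ.factorial := by
        push_cast [Nat.factorial_succ]; ring
      have hfpos : (0:ℝ) < ((ℓ+1).factorial : ℝ) := by exact_mod_cast Nat.factorial_pos (ℓ+1)
      have hfpos' : (0:ℝ) < (ℓ.factorial : ℝ) := by exact_mod_cast Nat.factorial_pos ℓ
      calc (-1:ℝ)^(ℓ+1) * c q (m+1) (ℓ+1)
          = (-1)^(ℓ+1) * c q m (ℓ+1) + q⁻¹^(m+1) * ((-1)^ℓ * c q m ℓ) := by
            show (-1:ℝ)^(ℓ+1) * (c q m (ℓ+1) - q⁻¹ ^ (m+1) * c q m ℓ) = _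
            ring
        _ ≤ S q m^(ℓ+1)/(ℓ+1).factorial + q⁻¹^(m+1) * (S q m^ℓ/ℓ.factorial) :=
            add_le_add (ih (ℓ+1)) (mul_le_mul_of_nonneg_left (ih ℓ) ht)
        _ = (S q m^(ℓ+1) + ((ℓ:ℝ)+1) * q⁻¹^(m+1) * S q m^ℓ)/(ℓ+1).factorial := by
            rw [hf]; field_simp
        _ ≤ (S q m + q⁻¹^(m+1))^(ℓ+1)/(ℓ+1).factorial := by
            gcongr
            exact pow_aux ℓ _ _ hS ht
        _ = S q (m+1)^(ℓ+1)/(ℓ+1).factorial := by rw [S_succ]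

lemma c_abs_le (q : ℝ) (hq : 1 < q) (m ℓ : ℕ) :
    |c q m ℓ| ≤ (q-1)⁻¹^ℓ / ℓ.factorial := by
  have h1 : |c q m ℓ| = (-1)^ℓ * c q m ℓ := by
    rw [← abs_of_nonneg (c_sign q hq m ℓ), abs_mul, abs_pow]
    norm_num
  rw [h1]
  refine le_trans (c_le q hq m ℓ) ?_
  gcongr
  · exact S_nonneg q hq m
  · exact S_le q hq m


lemma c_succ_succ (q : ℝ) (m ℓ : ℕ) :
    c q (m+1) (ℓ+1) = c q m (ℓ+1) - q⁻¹ ^ (m+1) * c q m ℓ := rfl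

lemma rec2 (q : ℝ) : ∀ m ℓ : ℕ,
    c q (m+1) (ℓ+1) = q⁻¹^(ℓ+1) * (c q m (ℓ+1) - c q m ℓ) := by
  intro m
  induction m with
  | zero =>
    intro ℓ
    match ℓ with
    | 0 => show c q 0 1 - q⁻¹^(0+1) * c q 0 0 = _; norm_num [c]
    | ℓ+1 => show c q 0 (ℓ+2) - q⁻¹^(0+1) * c q 0 (ℓ+1) = _; norm_num [c]
  | succ m ih =>
    intro ℓ
    match ℓ with
    | 0 =>
      conv_rhs => rw [c_succ_succ, c_zero', c_zero']
      rw [c_succ_succ q (m+1) 0, ih 0, c_zero', c_zero']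
      ring
    | ℓ+1 =>
      conv_rhs => rw [c_succ_succ q m (ℓ+1), c_succ_succ q m ℓ]
      rw [c_succ_succ q (m+1) (ℓ+1), ih (ℓ+1), ih ℓ]
      ring

noncomputable def L (q : ℝ) (ℓ : ℕ) : ℝ := 1 / ∏ k ∈ Finset.Icc 1 ℓ, (1 - q ^ k)

lemma one_sub_pow_ne (q : ℝ) (hq : 1 < q) (k : ℕ) (hk : k ≠ 0) : 1 - q ^ k ≠ 0 := by
  have : 1 < q ^ k := one_lt_pow₀ hq hk
  linarith

lemma tendsto_c (q : ℝ) (hq : 1 < q) : ∀ ℓ : ℕ,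
    Tendsto (fun m => c q m ℓ) atTop (nhds (L q ℓ)) := by
  have hq0 : (0:ℝ) < q := by linarith
  intro ℓ
  induction ℓ with
  | zero => simpa [c_zero', L] using tendsto_const_nhds
  | succ ℓ ihL =>
    set d := fun m => (-1:ℝ)^(ℓ+1) * c q m (ℓ+1) with hd_def
    have hmono : Monotone d := c_mono q hq (ℓ+1)
    have hbdd : BddAbove (Set.range d) := by
      refine ⟨(q-1)⁻¹^(ℓ+1)/(ℓ+1).factorial, ?_⟩
      rintro _ ⟨m, rfl⟩
      refine le_trans (c_le q hq m (ℓ+1)) ?_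
      gcongr
      · exact S_nonneg q hq m
      · exact S_le q hq m
    have hd : Tendsto d atTop (nhds (⨆ m, d m)) := tendsto_atTop_ciSup hmono hbdd
    set L' := (-1:ℝ)^(ℓ+1) * (⨆ m, d m) with hL'
    have hsq : (-1:ℝ)^(ℓ+1) * (-1:ℝ)^(ℓ+1) = 1 := by
      rw [← mul_pow]; norm_num
    have hc : Tendsto (fun m => c q m (ℓ+1)) atTop (nhds L') := by
      have he : (fun m => c q m (ℓ+1)) = fun m => (-1:ℝ)^(ℓ+1) * d m := by
        funext m
        rw [hd_def, ← mul_assoc, hsq, one_mul]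
      rw [he]
      exact hd.const_mul _
    have hshift : Tendsto (fun m => c q (m+1) (ℓ+1)) atTop (nhds L') :=
      hc.comp (tendsto_add_atTop_nat 1)
    have hrhs : Tendsto (fun m => q⁻¹^(ℓ+1) * (c q m (ℓ+1) - c q m ℓ)) atTop
        (nhds (q⁻¹^(ℓ+1) * (L' - L q ℓ))) := (hc.sub ihL).const_mul _
    have heq : L' = q⁻¹^(ℓ+1) * (L' - L q ℓ) := by
      refine tendsto_nhds_unique hshift ?_
      have : (fun m => c q (m+1) (ℓ+1)) = fun m => q⁻¹^(ℓ+1) * (c q m (ℓ+1) - c q m ℓ) :=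
        funext fun m => rec2 q m ℓ
      rw [this]
      exact hrhs
    have hLval : L' = L q (ℓ+1) := by
      have hqne : q ≠ 0 := ne_of_gt hq0
      have hpne : (1:ℝ) - q^(ℓ+1) ≠ 0 := one_sub_pow_ne q hq (ℓ+1) (by omega)
      have hPne : ∏ k ∈ Finset.Icc 1 ℓ, (1 - q ^ k) ≠ 0 :=
        Finset.prod_ne_zero_iff.2 fun k hk =>
          one_sub_pow_ne q hq k (by simp [Finset.mem_Icc] at hk; omega)
      have hLsucc : L q (ℓ+1) = L q ℓ / (1 - q^(ℓ+1)) := by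
        rw [L, L, Finset.prod_Icc_succ_top (Nat.le_add_left 1 ℓ), ← div_div]
      have hqp : (1:ℝ) - q⁻¹^(ℓ+1) ≠ 0 := by
        have h1 : q⁻¹^(ℓ+1) < 1 := by
          apply pow_lt_one₀ (by positivity)
          · rw [inv_lt_one_iff₀]; right; exact hq
          · omega
        linarith
      -- from heq : L' (1 - p) = - p * L q ℓ
      have h2 : L' * (1 - q⁻¹^(ℓ+1)) = - (q⁻¹^(ℓ+1)) * L q ℓ := by
        linear_combination heq
      rw [hLsucc]
      have hqpow : q⁻¹^(ℓ+1) * q^(ℓ+1) = 1 := by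
        rw [← mul_pow]; simp [inv_mul_cancel₀ hqne]
      rw [inv_pow] at h2
      have hPne0 : q^(ℓ+1) ≠ 0 := pow_ne_zero _ hqne
      field_simp at h2
      rw [eq_div_iff hpne]
      linear_combination -h2
    rw [← hLval]
    exact hc


lemma zp (q : ℝ) (n : ℕ) : q ^ (-(n:ℤ)) = q⁻¹ ^ n := by
  rw [zpow_neg, zpow_natCast, inv_pow]

lemma rep (q : ℝ) (hq : 1 < q) (φ₀ : SchwartzMap ℝ ℝ) (φ : ℕ → ℝ → ℝ)
    (hφ0 : φ 0 = ⇑φ₀)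
    (hrec : ∀ m : ℕ, ∀ x : ℝ, φ (m + 1) x = φ m x - q ^ (-(m + 1 : ℤ)) * φ m (x / q)) :
    ∀ m : ℕ, ∀ x : ℝ,
      φ m x = ∑ ℓ ∈ Finset.range (m+1), c q m ℓ * φ₀ (q⁻¹^ℓ * x) := by
  have hq0 : (0:ℝ) < q := by linarith
  have hqne : q ≠ 0 := ne_of_gt hq0
  intro m
  induction m with
  | zero => intro x; simp [c, hφ0]
  | succ m ih =>
    intro x
    have hz : q ^ (-(m + 1 : ℤ)) = q⁻¹ ^ (m+1) := by
      rw [show (-(m + 1 : ℤ)) = -((m+1 : ℕ) : ℤ) by push_cast; ring, zp]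
    rw [hrec m x, ih x, ih (x/q), hz]
    have harg : ∀ ℓ : ℕ, q⁻¹^ℓ * (x/q) = q⁻¹^(ℓ+1) * x := by
      intro ℓ
      rw [pow_succ, div_eq_mul_inv]
      ring
    rw [show (∑ ℓ ∈ Finset.range (m+1), c q m ℓ * φ₀ (q⁻¹^ℓ * (x/q)))
        = ∑ ℓ ∈ Finset.range (m+1), c q m ℓ * φ₀ (q⁻¹^(ℓ+1) * x) from
      Finset.sum_congr rfl fun ℓ _ => by rw [harg ℓ]]
    rw [Finset.sum_range_succ' _ (m+1)]
    simp only [c_succ_succ, c_zero']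
    have hA : (∑ ℓ ∈ Finset.range (m+1), c q m ℓ * φ₀ (q⁻¹^ℓ * x))
        = (∑ ℓ ∈ Finset.range m, c q m (ℓ+1) * φ₀ (q⁻¹^(ℓ+1) * x))
          + c q m 0 * φ₀ (q⁻¹^0 * x) := Finset.sum_range_succ' _ m
    have hC : (∑ ℓ ∈ Finset.range (m+1), c q m (ℓ+1) * φ₀ (q⁻¹^(ℓ+1) * x))
        = (∑ ℓ ∈ Finset.range m, c q m (ℓ+1) * φ₀ (q⁻¹^(ℓ+1) * x)) := by
      rw [Finset.sum_range_succ, c_zero_of_lt q m (m+1) (by omega)]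
      ring
    simp only [sub_mul]
    rw [Finset.sum_sub_distrib, hC, hA, c_zero', Finset.mul_sum]
    simp only [mul_assoc]
    ring

end Stmt8Aux



open Stmt8Aux in
/-- pointwise limit of the sequence `φ_m` as a series of dilates of `φ₀`
(Lemma `sum`). -/
theorem stmt_8 (q : ℝ) (hq : 1 < q) (φ₀ : SchwartzMap ℝ ℝ)
    (φ : ℕ → ℝ → ℝ) (hφ0 : φ 0 = ⇑φ₀)
    (hrec : ∀ m : ℕ, ∀ x : ℝ, φ (m + 1) x = φ m x - q ^ (-(m + 1 : ℤ)) * φ m (x / q)) :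
    ∀ x : ℝ,
      Tendsto (fun m => φ m x) atTop
        (nhds (∑' ℓ : ℕ, (1 / ∏ k ∈ Finset.Icc 1 ℓ, (1 - q ^ k)) * φ₀ (q ^ (-(ℓ : ℤ)) * x))) := by
  intro x
  have hq0 : (0:ℝ) < q := by linarith
  have hq1 : (0:ℝ) < q - 1 := by linarith
  set C := SchwartzMap.seminorm ℝ 0 0 φ₀ with hC_def
  have hC : ∀ y : ℝ, ‖φ₀ y‖ ≤ C := fun y => SchwartzMap.norm_le_seminorm ℝ φ₀ y
  have key : ∀ m : ℕ, φ m x = ∑' ℓ : ℕ, c q m ℓ * φ₀ (q⁻¹^ℓ * x) := by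
    intro m
    rw [rep q hq φ₀ φ hφ0 hrec m x]
    refine (tsum_eq_sum fun ℓ hℓ => ?_).symm
    rw [c_zero_of_lt q m ℓ (by simp [Finset.mem_range] at hℓ; omega)]
    ring
  simp only [key, zp]
  have := tendsto_tsum_of_dominated_convergence
    (𝓕 := atTop) (f := fun (m ℓ : ℕ) => c q m ℓ * φ₀ (q⁻¹^ℓ * x))
    (g := fun ℓ => L q ℓ * φ₀ (q⁻¹^ℓ * x))
    (bound := fun ℓ => (q-1)⁻¹^ℓ / ℓ.factorial * C)
    ((Real.summable_pow_div_factorial (q-1)⁻¹).mul_right C)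
    (fun ℓ => (tendsto_c q hq ℓ).mul_const _)
    (Eventually.of_forall fun m => fun ℓ => by
      rw [norm_mul]
      refine mul_le_mul (c_abs_le q hq m ℓ) (hC _) (norm_nonneg _) ?_
      positivity)
  exact this
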